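/- Let γ ≥ 1 and suppose every latency function ℓ_e of a multi-commodity routing instance is differentiable and satisfies ℓ_e(x) + x·ℓ_e′(x) ≤ γ·ℓ_e(x) for all x ≥ 0. Then every socially optimal edge flow is a γ-PNE: for every commodity k, every positive path p ∈ P^k satisfies ℓ_p ≤ γ·ℓ_q for every path q ∈ P^k. -/

import Mathlib

open scoped BigOperators

/-- A routing instance: a finite directed (multi)graph given by source/target maps
on edges, a finite set of commodities with sources, sinks, demands, and
load-dependent latency functions on edges. -/
structure RoutingInstance (V E K : Type*) where
  src : E → V
  tgt : E → V
  source : K → V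
  sink : K → V
  demand : K → ℝ
  latency : E → ℝ → ℝ

namespace RoutingInstance

variable {V E K : Type*} [Fintype V] [Fintype E] [Fintype K] [DecidableEq E]

/-- Standard assumptions: positive demands, latencies nonnegative and
nondecreasing on `[0, ∞)`. -/
def Standard (G : RoutingInstance V E K) : Prop :=
  (∀ k, 0 < G.demand k) ∧
  (∀ e x, (0:ℝ) ≤ x → 0 ≤ G.latency e x) ∧
  (∀ e, MonotoneOn (G.latency e) (Set.Ici (0:ℝ)))

/-- `G.IsWalkFrom s t l` : the list of edges `l` is a directed walk from `s` to `t`. -/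
def IsWalkFrom (G : RoutingInstance V E K) : V → V → List E → Prop
  | s, t, [] => s = t
  | s, t, e :: es => G.src e = s ∧ IsWalkFrom G (G.tgt e) t es

/-- The list of vertices visited by a walk starting at `s`. -/
def walkVerts (G : RoutingInstance V E K) (s : V) (l : List E) : List V :=
  s :: l.map G.tgt

/-- A simple directed path from the source of commodity `k` to its sink. -/
def IsPathOf (G : RoutingInstance V E K) (k : K) (p : List E) : Prop :=
  G.IsWalkFrom (G.source k) (G.sink k) p ∧ (G.walkVerts (G.source k) p).Nodup

/-- A feasible path flow: nonnegative, supported on simple `s_k`-`t_k` paths,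
and routing the whole demand of each commodity. -/
def Feasible (G : RoutingInstance V E K) (f : K → (List E →₀ ℝ)) : Prop :=
  (∀ k p, 0 ≤ f k p) ∧
  (∀ k p, f k p ≠ 0 → G.IsPathOf k p) ∧
  (∀ k, ((f k).sum fun _ v => v) = G.demand k)

/-- Edge flow of commodity `k` induced by a path flow. -/
def edgeFlowK (G : RoutingInstance V E K) (f : K → (List E →₀ ℝ)) (k : K) (e : E) : ℝ :=
  (f k).sum fun p v => if e ∈ p then v else 0

/-- Total edge flow induced by a path flow. -/
def edgeFlow (G : RoutingInstance V E K) (f : K → (List E →₀ ℝ)) (e : E) : ℝ :=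
  ∑ k, G.edgeFlowK f k e

/-- Latency (cost) of a path under the edge flows induced by the path flow `f`. -/
def pathCost (G : RoutingInstance V E K) (f : K → (List E →₀ ℝ)) (p : List E) : ℝ :=
  (p.map fun e => G.latency e (G.edgeFlow f e)).sum

/-- A path is used by commodity `k` if it carries positive flow in `f`. -/
def Used (G : RoutingInstance V E K) (f : K → (List E →₀ ℝ)) (k : K) (p : List E) : Prop :=
  0 < f k p

/-- A path is positive for commodity `k` if each of its edges carries positive
commodity-`k` flow. -/
def PositivePath (G : RoutingInstance V E K) (f : K → (List E →₀ ℝ)) (k : K) (p : List E) :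
    Prop :=
  G.IsPathOf k p ∧ ∀ e ∈ p, 0 < G.edgeFlowK f k e

/-- θ-Positive Nash Equilibrium (a property of the induced edge flow):
every positive path costs at most θ times any path of the same commodity. -/
def IsPNE (G : RoutingInstance V E K) (θ : ℝ) (f : K → (List E →₀ ℝ)) : Prop :=
  ∀ k p q, G.PositivePath f k p → G.IsPathOf k q →
    G.pathCost f p ≤ θ * G.pathCost f q

/-- θ-Used Nash Equilibrium: every used path costs at most θ times any path
of the same commodity. -/
def IsUNE (G : RoutingInstance V E K) (θ : ℝ) (f : K → (List E →₀ ℝ)) : Prop :=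
  ∀ k p q, G.Used f k p → G.IsPathOf k q →
    G.pathCost f p ≤ θ * G.pathCost f q

/-- θ-Envy Free: every used path costs at most θ times any used path
of the same commodity. -/
def IsEF (G : RoutingInstance V E K) (θ : ℝ) (f : K → (List E →₀ ℝ)) : Prop :=
  ∀ k p q, G.Used f k p → G.Used f k q →
    G.pathCost f p ≤ θ * G.pathCost f q

/-- Social cost of a path flow. -/
def socialCost (G : RoutingInstance V E K) (f : K → (List E →₀ ℝ)) : ℝ :=
  ∑ e, G.edgeFlow f e * G.latency e (G.edgeFlow f e)

end RoutingInstance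


namespace RoutingInstance

section Aux
set_option linter.unusedSectionVars false

variable {V E K : Type*} [Fintype V] [Fintype E] [Fintype K] [DecidableEq E]
variable (G : RoutingInstance V E K)

lemma walk_nil {s t : V} : G.IsWalkFrom s t [] ↔ s = t := Iff.rfl

lemma walk_cons {s t : V} {e : E} {l : List E} :
    G.IsWalkFrom s t (e :: l) ↔ G.src e = s ∧ G.IsWalkFrom (G.tgt e) t l := Iff.rfl

lemma walk_append : ∀ (a b : List E) (s t : V),
    G.IsWalkFrom s t (a ++ b) ↔ ∃ v, G.IsWalkFrom s v a ∧ G.IsWalkFrom v t b := by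
  intro a
  induction a with
  | nil =>
    intro b s t
    constructor
    · intro h; exact ⟨s, rfl, h⟩
    · rintro ⟨v, hv, h⟩; cases hv; exact h
  | cons e a ih =>
    intro b s t
    simp only [List.cons_append, walk_cons, ih, and_assoc]
    constructor
    · rintro ⟨h1, v, h2, h3⟩; exact ⟨v, h1, h2, h3⟩
    · rintro ⟨v, h1, h2, h3⟩; exact ⟨h1, v, h2, h3⟩

lemma walk_shortcut (t : V) : ∀ (n : ℕ) (s : V) (l : List E), l.length ≤ n →
    G.IsWalkFrom s t l →
    ∃ m, m.Sublist l ∧ G.IsWalkFrom s t m ∧ (G.walkVerts s m).Nodup := by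
  intro n
  induction n with
  | zero =>
    intro s l hlen hw
    rw [Nat.le_zero, List.length_eq_zero_iff] at hlen
    subst hlen
    exact ⟨[], List.Sublist.refl _, hw, by simp [walkVerts]⟩
  | succ n ih =>
    intro s l hlen hw
    by_cases hs : s ∈ l.map G.tgt
    · obtain ⟨e, he, hte⟩ := List.mem_map.1 hs
      obtain ⟨a, b, rfl⟩ := List.append_of_mem he
      obtain ⟨v, hva, hvb⟩ := (G.walk_append a (e :: b) s t).1 hw
      rcases hvb with ⟨hsrc, hwb⟩
      rw [hte] at hwb
      have hblen : b.length ≤ n := by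
        have := hlen; simp [List.length_append] at this; omega
      obtain ⟨m, hm1, hm2, hm3⟩ := ih s b hblen hwb
      exact ⟨m, hm1.trans ((List.sublist_cons_self e b).trans (List.sublist_append_right a _)),
        hm2, hm3⟩
    · cases l with
      | nil => exact ⟨[], List.Sublist.refl _, hw, by simp [walkVerts]⟩
      | cons e l' =>
        rcases hw with ⟨hsrc, hw⟩
        obtain ⟨m, hm1, hm2, hm3⟩ := ih (G.tgt e) l' (by simpa using hlen) hw
        refine ⟨e :: m, hm1.cons₂ e, ⟨hsrc, hm2⟩, ?_⟩
        simp only [walkVerts, List.map_cons, List.nodup_cons] at hm3 ⊢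
        refine ⟨?_, hm3⟩
        simp only [List.mem_cons]
        rintro (h | h)
        · exact hs (List.mem_map.2 ⟨e, by simp, h.symm⟩)
        · obtain ⟨e', he', hte'⟩ := List.mem_map.1 h
          exact hs (List.mem_map.2 ⟨e', by simp [hm1.subset he'], hte'⟩)

lemma edges_nodup_of_verts_nodup {s : V} {l : List E}
    (h : (G.walkVerts s l).Nodup) : l.Nodup :=
  List.Nodup.of_map G.tgt (by simpa [walkVerts] using h.of_cons)

/-- Marginal cost of an edge at the flow induced by `f`. -/
noncomputable def mc (f : K → (List E →₀ ℝ)) (e : E) : ℝ :=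
  G.latency e (G.edgeFlow f e) + G.edgeFlow f e * deriv (G.latency e) (G.edgeFlow f e)

lemma edgeFlowK_nonneg {f : K → (List E →₀ ℝ)} (hf0 : ∀ k p, 0 ≤ f k p) (k : K) (e : E) :
    0 ≤ G.edgeFlowK f k e := by
  refine Finset.sum_nonneg ?_
  intro p _
  simp only []
  split
  · exact hf0 k p
  · exact le_refl 0

lemma edgeFlow_nonneg {f : K → (List E →₀ ℝ)} (hf0 : ∀ k p, 0 ≤ f k p) (e : E) :
    0 ≤ G.edgeFlow f e :=
  Finset.sum_nonneg fun k _ => G.edgeFlowK_nonneg hf0 k e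

lemma exists_used_of_edgeFlowK_pos {f : K → (List E →₀ ℝ)} (hf0 : ∀ k p, 0 ≤ f k p)
    {k : K} {e : E} (h : 0 < G.edgeFlowK f k e) : ∃ p, 0 < f k p ∧ e ∈ p := by
  have hne : G.edgeFlowK f k e ≠ 0 := ne_of_gt h
  obtain ⟨p, _, hp⟩ := Finset.exists_ne_zero_of_sum_ne_zero hne
  refine ⟨p, ?_, ?_⟩
  · rcases lt_or_eq_of_le (hf0 k p) with h' | h'
    · exact h'
    · exfalso; apply hp; simp [← h']
  · by_contra hmem
    exact hp (by simp [hmem])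

lemma sum_map_mul_left' (γ : ℝ) (w : E → ℝ) (l : List E) :
    (l.map fun e => γ * w e).sum = γ * (l.map w).sum := by
  induction l with
  | nil => simp
  | cons e l ih => simp [ih]; ring

lemma deriv_nonneg_of_right_min' {h : ℝ → ℝ} {D ε₀ : ℝ} (hε₀ : 0 < ε₀)
    (hd : HasDerivAt h D 0) (hmin : ∀ ε ∈ Set.Ioo (0:ℝ) ε₀, h 0 ≤ h ε) : 0 ≤ D := by
  have hslope := hasDerivAt_iff_tendsto_slope.1 hd
  have h2 : Filter.Tendsto (slope h 0) (nhdsWithin 0 (Set.Ioi 0)) (nhds D) :=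
    hslope.mono_left (nhdsWithin_mono 0 (fun x hx => ne_of_gt hx))
  refine ge_of_tendsto h2 ?_
  filter_upwards [Ioo_mem_nhdsGT_of_mem (Set.mem_Ico.2 ⟨le_refl (0:ℝ), hε₀⟩)] with ε hε
  have h1 : 0 ≤ h ε - h 0 := sub_nonneg.2 (hmin ε hε)
  rw [slope_def_field]
  have h3 : 0 < ε - 0 := by linarith [hε.1]
  exact div_nonneg h1 h3.le

lemma deriv_nonneg_of_monotoneOn' {φ : ℝ → ℝ} {x : ℝ} (hx : (0:ℝ) ≤ x)
    (hm : MonotoneOn φ (Set.Ici 0)) (hd : DifferentiableAt ℝ φ x) : 0 ≤ deriv φ x := by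
  have hslope := hasDerivAt_iff_tendsto_slope.1 hd.hasDerivAt
  have h2 : Filter.Tendsto (slope φ x) (nhdsWithin x (Set.Ioi x)) (nhds (deriv φ x)) :=
    hslope.mono_left (nhdsWithin_mono x (fun y hy => ne_of_gt hy))
  refine ge_of_tendsto h2 ?_
  filter_upwards [self_mem_nhdsWithin] with y hy
  have hxy : x < y := hy
  have hφ : φ x ≤ φ y := hm hx (le_trans hx hxy.le) hxy.le
  rw [slope_def_field]
  exact div_nonneg (sub_nonneg.2 hφ) (sub_pos.2 hxy).le

lemma opt_key [DecidableEq K] (hG : G.Standard)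
    (hdiff : ∀ e x, (0:ℝ) ≤ x → DifferentiableAt ℝ (G.latency e) x)
    {f : K → (List E →₀ ℝ)} (hf : G.Feasible f)
    (hopt : ∀ g, G.Feasible g → G.socialCost f ≤ G.socialCost g)
    (k : K) {r q : List E} (hr : 0 < f k r) (hq : G.IsPathOf k q) :
    (r.map (G.mc f)).sum ≤ (q.map (G.mc f)).sum := by
  by_cases hrq : r = q
  · subst hrq; exact le_refl _
  obtain ⟨hf0, hfs, hfd⟩ := hf
  have hxe : ∀ e, 0 ≤ G.edgeFlow f e := G.edgeFlow_nonneg hf0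
  set c : E → ℝ := fun e => (if e ∈ q then 1 else 0) - (if e ∈ r then 1 else 0) with hc
  set F : ℝ → K → (List E →₀ ℝ) := fun ε =>
    Function.update f k (f k + ε • Finsupp.single q 1 - ε • Finsupp.single r 1) with hF
  have hFkk : ∀ ε, F ε k = f k + ε • Finsupp.single q 1 - ε • Finsupp.single r 1 := by
    intro ε; simp [hF]
  have happly : ∀ ε p', F ε k p' = f k p' + (if q = p' then ε else 0) - (if r = p' then ε else 0) := by
    intro ε p'
    rw [hFkk ε]
    simp [Finsupp.single_apply, smul_eq_mul, mul_ite, mul_one, mul_zero]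
  have hFk' : ∀ (ε : ℝ) k', k' ≠ k → F ε k' = f k' := by
    intro ε k' h; simp [hF, Function.update_of_ne h]
  have hsum : ∀ (ε : ℝ) (h : List E → ℝ → ℝ), (∀ p, h p 0 = 0) →
      (∀ p a b, h p (a + b) = h p a + h p b) →
      (F ε k).sum h = (f k).sum h + h q ε - h r ε := by
    intro ε h h0 hadd
    have hsub : ∀ (p : List E) (a b : ℝ), h p (a - b) = h p a - h p b := by
      intro p a b
      have h1 := hadd p (a - b) b
      rw [sub_add_cancel] at h1
      linarith
    rw [hFkk ε]
    rw [Finsupp.sum_sub_index (fun p a b => hsub p a b),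
      Finsupp.sum_add_index' h0 hadd, Finsupp.smul_single, Finsupp.smul_single,
      smul_eq_mul, mul_one, Finsupp.sum_single_index (h0 q), Finsupp.sum_single_index (h0 r)]
  have hfeas : ∀ ε ∈ Set.Ioo (0:ℝ) (f k r), G.Feasible (F ε) := by
    intro ε hε
    refine ⟨?_, ?_, ?_⟩
    · intro k' p'
      by_cases hk' : k' = k
      · obtain rfl := hk'.symm
        rw [happly]
        by_cases h1 : r = p'
        · have h2 : ¬ q = r := fun h => hrq h.symm
          rw [← h1, if_neg h2, if_pos rfl]
          have := hε.2
          linarith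
        · rw [if_neg h1]
          split
          · linarith [hf0 k p', hε.1]
          · simp [hf0 k p']
      · rw [hFk' ε k' hk']; exact hf0 k' p'
    · intro k' p' hne
      by_cases hk' : k' = k
      · obtain rfl := hk'.symm
        rw [happly] at hne
        by_cases hq' : q = p'
        · exact hq' ▸ hq
        · by_cases hr' : r = p'
          · exact hr' ▸ (hfs k r (ne_of_gt hr))
          · apply hfs k p'
            simpa [hq', hr'] using hne
      · rw [hFk' ε k' hk'] at hne; exact hfs k' p' hne
    · intro k'
      by_cases hk' : k' = k
      · obtain rfl := hk'.symm
        rw [hsum ε (fun _ v => v) (fun _ => rfl) (fun _ _ _ => rfl), hfd k]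
        ring
      · rw [hFk' ε k' hk']; exact hfd k'
  have hefk : ∀ (ε : ℝ) (e : E), G.edgeFlowK (F ε) k e = G.edgeFlowK f k e + ε * c e := by
    intro ε e
    show (F ε k).sum (fun p v => if e ∈ p then v else 0) = _
    rw [hsum ε _ (by intro p; simp) (by intro p a b; split <;> simp)]
    show G.edgeFlowK f k e + _ - _ = _
    simp only [hc, mul_sub, mul_ite, mul_one, mul_zero]
    ring
  have hef : ∀ (ε : ℝ) (e : E), G.edgeFlow (F ε) e = G.edgeFlow f e + ε * c e := by
    intro ε e
    have h1 : ∀ k', G.edgeFlowK (F ε) k' e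
        = G.edgeFlowK f k' e + (if k' = k then ε * c e else 0) := by
      intro k'
      by_cases hk' : k' = k
      · obtain rfl := hk'.symm; simp [hefk]
      · have : G.edgeFlowK (F ε) k' e = G.edgeFlowK f k' e := by
          show (F ε k').sum _ = (f k').sum _
          rw [hFk' ε k' hk']
        simp [hk', this]
    show (∑ k', G.edgeFlowK (F ε) k' e) = (∑ k', G.edgeFlowK f k' e) + ε * c e
    simp_rw [h1]
    rw [Finset.sum_add_distrib, Finset.sum_ite_eq' Finset.univ k (fun _ => ε * c e)]
    simp
  set hfun : ℝ → ℝ := fun ε => ∑ e, (G.edgeFlow f e + ε * c e) * G.latency e (G.edgeFlow f e + ε * c e) with hhfun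
  have hsc : ∀ ε, G.socialCost (F ε) = hfun ε := by
    intro ε
    show (∑ e, G.edgeFlow (F ε) e * G.latency e (G.edgeFlow (F ε) e)) = _
    simp_rw [hef]
    rfl
  have hF0 : F 0 = f := by
    funext k'
    by_cases hk' : k' = k
    · obtain rfl := hk'.symm; rw [hFkk 0]; simp
    · exact hFk' 0 k' hk'
  have hD : HasDerivAt hfun
      (∑ e, c e * (G.latency e (G.edgeFlow f e)
        + G.edgeFlow f e * deriv (G.latency e) (G.edgeFlow f e))) 0 := by
    apply HasDerivAt.fun_sum
    intro e _
    have haff : HasDerivAt (fun ε : ℝ => G.edgeFlow f e + ε * c e) (c e) 0 := by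
      simpa using ((hasDerivAt_id (0:ℝ)).mul_const (c e)).const_add (G.edgeFlow f e)
    have h0 : G.edgeFlow f e + 0 * c e = G.edgeFlow f e := by ring
    have hl : HasDerivAt (G.latency e) (deriv (G.latency e) (G.edgeFlow f e))
        (G.edgeFlow f e + 0 * c e) := by
      rw [h0]; exact (hdiff e (G.edgeFlow f e) (hxe e)).hasDerivAt
    have hcomp : HasDerivAt (fun ε : ℝ => G.latency e (G.edgeFlow f e + ε * c e))
        (deriv (G.latency e) (G.edgeFlow f e) * c e) 0 := HasDerivAt.comp 0 hl haff
    have hmul := haff.fun_mul hcomp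
    simp only [zero_mul, add_zero] at hmul
    refine hmul.congr_deriv ?_
    ring
  have hmin : ∀ ε ∈ Set.Ioo (0:ℝ) (f k r), hfun 0 ≤ hfun ε := by
    intro ε hε
    rw [← hsc ε, ← hsc 0, hF0]
    exact hopt (F ε) (hfeas ε hε)
  have hD0 := deriv_nonneg_of_right_min' hr hD hmin
  have hrP := hfs k r (ne_of_gt hr)
  have hrnd : r.Nodup := G.edges_nodup_of_verts_nodup hrP.2
  have hqnd : q.Nodup := G.edges_nodup_of_verts_nodup hq.2
  have hfilter : ∀ l : List E, Finset.univ.filter (fun e => e ∈ l) = l.toFinset := by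
    intro l; ext e; simp
  have hsplit : (∑ e, c e * (G.latency e (G.edgeFlow f e)
        + G.edgeFlow f e * deriv (G.latency e) (G.edgeFlow f e)))
      = (q.map (G.mc f)).sum - (r.map (G.mc f)).sum := by
    rw [← List.sum_toFinset _ hqnd, ← List.sum_toFinset _ hrnd]
    rw [← hfilter q, ← hfilter r, Finset.sum_filter, Finset.sum_filter,
      ← Finset.sum_sub_distrib]
    refine Finset.sum_congr rfl ?_
    intro e _
    simp only [hc, mc]
    split <;> split <;> ring
  rw [hsplit] at hD0
  linarith
end Aux

end RoutingInstance

open RoutingInstance in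
/-- If γ ≥ 1 and every latency function is differentiable with
ℓ_e(x) + x·ℓ_e′(x) ≤ γ·ℓ_e(x) for all x ≥ 0, then every socially optimal flow is a
γ-PNE. -/
theorem stmt_11 {V E K : Type*} [Fintype V] [Fintype E] [Fintype K] [DecidableEq E]
    (G : RoutingInstance V E K) (hG : G.Standard)
    (hdiff : ∀ e x, (0:ℝ) ≤ x → DifferentiableAt ℝ (G.latency e) x)
    (hconv : ∀ e, ConvexOn ℝ (Set.Ici (0:ℝ)) (fun x => x * G.latency e x))
    (γ : ℝ) (hγ : 1 ≤ γ)
    (hmarg : ∀ e x, (0:ℝ) ≤ x →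
      G.latency e x + x * deriv (G.latency e) x ≤ γ * G.latency e x)
    (f : K → (List E →₀ ℝ)) (hf : G.Feasible f)
    (hopt : ∀ g : K → (List E →₀ ℝ), G.Feasible g → G.socialCost f ≤ G.socialCost g) :
    G.IsPNE γ f := by
  classical
  intro k p q hp hq
  obtain ⟨hf0, hfs, hfd⟩ := id hf
  set m : E → ℝ := G.mc f with hm
  have hxe : ∀ e, 0 ≤ G.edgeFlow f e := G.edgeFlow_nonneg hf0
  have hderiv_nonneg : ∀ e, 0 ≤ deriv (G.latency e) (G.edgeFlow f e) := fun e =>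
    deriv_nonneg_of_monotoneOn' (hxe e) (hG.2.2 e) (hdiff e _ (hxe e))
  have hlm : ∀ e, G.latency e (G.edgeFlow f e) ≤ m e := by
    intro e
    have := mul_nonneg (hxe e) (hderiv_nonneg e)
    simp only [hm, mc]
    linarith
  have hm_nonneg : ∀ e, 0 ≤ m e := fun e => le_trans (hG.2.1 e _ (hxe e)) (hlm e)
  have hfknz : f k ≠ 0 := by
    intro h0
    have hd := hfd k
    rw [h0, Finsupp.sum_zero_index] at hd
    linarith [hG.1 k]
  obtain ⟨r₀, hr₀ne⟩ := Finsupp.ne_iff.1 hfknz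
  have hr₀ : 0 < f k r₀ := lt_of_le_of_ne (hf0 k r₀) (Ne.symm (by simpa using hr₀ne))
  have key : ∀ r, 0 < f k r → ∀ q', G.IsPathOf k q' → (r.map m).sum ≤ (q'.map m).sum :=
    fun r hr q' hq' => G.opt_key hG hdiff hf hopt k hr hq'
  set L := (r₀.map m).sum with hL
  have used_cost : ∀ r, 0 < f k r → (r.map m).sum = L := fun r hr =>
    le_antisymm (key r hr r₀ (hfs k r₀ (ne_of_gt hr₀))) (key r₀ hr₀ r (hfs k r (ne_of_gt hr)))
  have walk_lb : ∀ l, G.IsWalkFrom (G.source k) (G.sink k) l → L ≤ (l.map m).sum := by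
    intro l hw
    obtain ⟨m', hsub, hw', hnd⟩ :=
      G.walk_shortcut (G.sink k) l.length (G.source k) l (le_refl _) hw
    have h1 : L ≤ (m'.map m).sum := key r₀ hr₀ m' ⟨hw', hnd⟩
    have h2 : (m'.map m).sum ≤ (l.map m).sum := by
      refine List.Sublist.sum_le_sum (hsub.map m) ?_
      intro a ha
      obtain ⟨e, _, rfl⟩ := List.mem_map.1 ha
      exact hm_nonneg e
    linarith
  set P : V → ℝ → Prop := fun v a => ∃ r1 r2, 0 < f k (r1 ++ r2) ∧
    G.IsWalkFrom (G.source k) v r1 ∧ G.IsWalkFrom v (G.sink k) r2 ∧ (r1.map m).sum = a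
    with hPdef
  have Puniq : ∀ v a a', P v a → P v a' → a = a' := by
    rintro v a a' ⟨r1, r2, hu, hw1, hw2, hc⟩ ⟨r1', r2', hu', hw1', hw2', hc'⟩
    have h1 : (r1.map m).sum + (r2.map m).sum = L := by
      have := used_cost _ hu
      rwa [List.map_append, List.sum_append] at this
    have h1' : (r1'.map m).sum + (r2'.map m).sum = L := by
      have := used_cost _ hu'
      rwa [List.map_append, List.sum_append] at this
    have h2 : L ≤ (r1.map m).sum + (r2'.map m).sum := by
      have hw := (G.walk_append r1 r2' _ _).2 ⟨v, hw1, hw2'⟩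
      have := walk_lb _ hw
      rwa [List.map_append, List.sum_append] at this
    have h2' : L ≤ (r1'.map m).sum + (r2.map m).sum := by
      have hw := (G.walk_append r1' r2 _ _).2 ⟨v, hw1', hw2⟩
      have := walk_lb _ hw
      rwa [List.map_append, List.sum_append] at this
    linarith
  have Psrc : P (G.source k) 0 :=
    ⟨[], r₀, by simpa using hr₀, rfl, (hfs k r₀ (ne_of_gt hr₀)).1, rfl⟩
  have Psink : P (G.sink k) L :=
    ⟨r₀, [], by simpa using hr₀, (hfs k r₀ (ne_of_gt hr₀)).1, rfl, rfl⟩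
  have Ptight : ∀ e, 0 < G.edgeFlowK f k e → ∃ b, P (G.src e) b ∧ P (G.tgt e) (b + m e) := by
    intro e he
    obtain ⟨pu, hpu, hepu⟩ := G.exists_used_of_edgeFlowK_pos hf0 he
    obtain ⟨a, b, rfl⟩ := List.append_of_mem hepu
    have hw := (hfs k _ (ne_of_gt hpu)).1
    obtain ⟨v, hwa, hwb⟩ := (G.walk_append a (e :: b) _ _).1 hw
    obtain ⟨hsrc, hwb'⟩ := hwb
    rw [← hsrc] at hwa
    refine ⟨(a.map m).sum, ⟨a, e :: b, hpu, hwa, ⟨rfl, hwb'⟩, rfl⟩,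
      ⟨a ++ [e], b, ?_, ?_, hwb', ?_⟩⟩
    · simpa [List.append_assoc] using hpu
    · exact (G.walk_append a [e] _ _).2 ⟨G.src e, hwa, ⟨rfl, rfl⟩⟩
    · simp [List.map_append]
  have tele : ∀ l (v : V) (a : ℝ), G.IsWalkFrom v (G.sink k) l →
      (∀ e ∈ l, 0 < G.edgeFlowK f k e) → P v a → a + (l.map m).sum = L := by
    intro l
    induction l with
    | nil =>
      intro v a hw hpos hPv
      have hv : v = G.sink k := hw
      subst hv
      have := Puniq _ _ _ hPv Psink
      simpa using this
    | cons e l ih =>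
      intro v a hw hpos hPv
      obtain ⟨hsrc, hw'⟩ := hw
      obtain ⟨b, hPb, hPb'⟩ := Ptight e (hpos e (by simp))
      rw [hsrc] at hPb
      have hab : a = b := Puniq v a b hPv hPb
      have hrec := ih (G.tgt e) (b + m e) hw' (fun e' he' => hpos e' (by simp [he'])) hPb'
      simp only [List.map_cons, List.sum_cons]
      linarith
  obtain ⟨⟨hpw, hpnd⟩, hppos⟩ := hp
  have hLp : (p.map m).sum = L := by
    have := tele p (G.source k) 0 hpw hppos Psrc
    linarith
  have hqm : L ≤ (q.map m).sum := key r₀ hr₀ q hq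
  have h1 : G.pathCost f p ≤ (p.map m).sum := List.sum_le_sum (fun e _ => hlm e)
  have h2 : (q.map m).sum ≤ γ * G.pathCost f q := by
    have h3 : (q.map m).sum ≤ (q.map (fun e => γ * G.latency e (G.edgeFlow f e))).sum :=
      List.sum_le_sum (fun e _ => by simpa [hm, mc] using hmarg e _ (hxe e))
    have h4 : (q.map (fun e => γ * G.latency e (G.edgeFlow f e))).sum
        = γ * G.pathCost f q :=
      sum_map_mul_left' γ _ q
    linarith
  linarith
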